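/- Let K be a henselian discrete valuation field with residue field of characteristic p>0, Λ a finite field of characteristic ℓ ≠ p, and M, N finitely generated Λ-modules with continuous actions of the absolute Galois group G_K. (i) If M and N are isoclinic of slopes r and r' respectively with r ≥ r', then the largest slope of M ⊗_Λ N is at most r and dimtot_K(M ⊗_Λ N) ≤ dim_Λ(N)·dim_Λ(M)·r; if moreover r > r', then M ⊗_Λ N is isoclinic of slope r and dimtot_K(M ⊗_Λ N) = dim_Λ(N)·dimtot_K(M) = dim_Λ(N)·dim_Λ(M)·r. (ii) If M and N are logarithmic isoclinic of logarithmic slopes r_log and r_log' respectively with r_log ≥ r_log', then the largest logarithmic slope of M ⊗_Λ N is at most r_log and sw_K(M ⊗_Λ N) ≤ dim_Λ(N)·dim_Λ(M)·r_log; if moreover r_log > r_log', then M ⊗_Λ N is logarithmic isoclinic of logarithmic slope r_log and sw_K(M ⊗_Λ N) = dim_Λ(N)·sw_K(M) = dim_Λ(N)·dim_Λ(M)·r_log. -/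

import Mathlib

/-!
STATEMENT 12 (Lemma 1.7 `tensordtsw`): Let `K` be a henselian discrete valuation
field with residue field of characteristic `p > 0`, `Λ` a finite field of
characteristic `ℓ ≠ p`, and `M`, `N` finitely generated `Λ`-modules with continuous
actions of the absolute Galois group `G_K`.

(i) If `M` and `N` are isoclinic of slopes `r` and `r'` with `r ≥ r'`, then the
largest slope of `M ⊗_Λ N` is at most `r` and
`dimtot_K(M ⊗ N) ≤ dim N · dim M · r`; if moreover `r > r'` then `M ⊗ N` is isoclinic
of slope `r` and `dimtot_K(M ⊗ N) = dim N · dimtot_K(M) = dim N · dim M · r`.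

(ii) The same statements for the logarithmic filtration, logarithmic slopes and the
Swan conductor `sw_K`.

Modelling: the absolute Galois group `G_K` is an abstract group `G` carrying the
Abbes–Saito ramification filtration `fil` (slopes start at the threshold `1`) and
the logarithmic ramification filtration `logfil` (logarithmic slopes start at the
threshold `0`).  Isoclinicity, slope decompositions, the total dimension `dimtot`
and the Swan conductor (namely `dimtotOf` of a (log-)slope decomposition) are
defined below exactly as in Abbes–Saito ramification theory.
"The largest slope of `M ⊗ N` is at most `r`" is expressed by the vanishing of the
coinvariants condition: `fil s` acts trivially on `M ⊗ N` for every `s > r`.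
-/

open scoped TensorProduct

section Slopes

variable {Λ : Type*} [Field Λ] {G : Type*} [Group G]
variable {M : Type*} [AddCommGroup M] [Module Λ M]

/-- The submodule of invariants of the representation `ρ` under a subgroup `H`. -/
def subInvariants (ρ : Representation Λ G M) (H : Subgroup G) : Submodule Λ M where
  carrier := {v | ∀ g ∈ H, ρ g v = v}
  add_mem' := by
    intro a b ha hb g hg
    simp only [Set.mem_setOf_eq] at *
    rw [map_add, ha g hg, hb g hg]
  zero_mem' := by
    intro g hg
    simp
  smul_mem' := by
    intro c a ha g hg
    simp only [Set.mem_setOf_eq] at *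
    rw [map_smul, ha g hg]

/-- `ρ` is isoclinic of slope `r` with respect to the ramification filtration `fil`,
where slopes are measured starting from the threshold `t` (`t = 1` for the
Abbes–Saito filtration, `t = 0` for the logarithmic one): the invariants under
`fil r` vanish (when `r > t`), while `fil s` acts trivially for every `s > r`. -/
def IsIsoclinic (fil : ℚ → Subgroup G) (t : ℚ) (ρ : Representation Λ G M) (r : ℚ) : Prop :=
  t ≤ r ∧ (t < r → subInvariants ρ (fil r) = ⊥) ∧
    ∀ s : ℚ, r < s → subInvariants ρ (fil s) = ⊤

/-- `W` is the (Abbes–Saito) slope decomposition of the representation `ρ` with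
respect to the filtration `fil` with threshold `t`: an internal direct sum
decomposition into stable submodules, with finitely many nonzero pieces, the piece
`W r` being isoclinic of slope `r`. -/
def IsSlopeDecomp (fil : ℚ → Subgroup G) (t : ℚ) (ρ : Representation Λ G M)
    (W : ℚ → Submodule Λ M) : Prop :=
  (∀ (r : ℚ) (g : G), ∀ v ∈ W r, ρ g v ∈ W r) ∧
  {r : ℚ | W r ≠ ⊥}.Finite ∧
  DirectSum.IsInternal W ∧
  ∀ r : ℚ, W r ≠ ⊥ →
    t ≤ r ∧ (t < r → ∀ v ∈ W r, (∀ g ∈ fil r, ρ g v = v) → v = 0) ∧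
      ∀ s : ℚ, r < s → ∀ g ∈ fil s, ∀ v ∈ W r, ρ g v = v

/-- The total dimension (for the Abbes–Saito filtration), resp. the Swan conductor
(for the logarithmic filtration), attached to a slope decomposition `W`:
`∑ r, r · dim W r`. -/
noncomputable def dimtotOf (W : ℚ → Submodule Λ M) : ℚ :=
  ∑ᶠ r : ℚ, r * (Module.finrank Λ (W r) : ℚ)

end Slopes

section Aux

open Module

variable {Λ : Type*} [Field Λ] {G : Type*} [Group G]
variable {M : Type*} [AddCommGroup M] [Module Λ M]
variable {N : Type*} [AddCommGroup N] [Module Λ N]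

lemma mem_subInvariants {ρ : Representation Λ G M} {H : Subgroup G} {v : M} :
    v ∈ subInvariants ρ H ↔ ∀ g ∈ H, ρ g v = v := Iff.rfl

lemma subInvariants_tprod_eq_top (ρM : Representation Λ G M) (ρN : Representation Λ G N)
    (H : Subgroup G) (hM : subInvariants ρM H = ⊤) (hN : subInvariants ρN H = ⊤) :
    subInvariants (ρM.tprod ρN) H = ⊤ := by
  rw [eq_top_iff]
  rintro v -
  rw [mem_subInvariants]
  intro g hg
  have hMg : ∀ m : M, ρM g m = m := fun m =>
    (mem_subInvariants.mp (hM ▸ Submodule.mem_top : m ∈ subInvariants ρM H)) g hg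
  have hNg : ∀ n : N, ρN g n = n := fun n =>
    (mem_subInvariants.mp (hN ▸ Submodule.mem_top : n ∈ subInvariants ρN H)) g hg
  induction v using TensorProduct.induction_on with
  | zero => simp
  | tmul m n => simp [Representation.tprod_apply, hMg m, hNg n]
  | add x y hx hy => rw [map_add, hx, hy]

lemma subInvariants_tprod_eq_bot [FiniteDimensional Λ N]
    (ρM : Representation Λ G M) (ρN : Representation Λ G N)
    (H : Subgroup G) (hM : subInvariants ρM H = ⊥) (hN : subInvariants ρN H = ⊤) :
    subInvariants (ρM.tprod ρN) H = ⊥ := by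
  classical
  rw [eq_bot_iff]
  intro v hv
  rw [mem_subInvariants] at hv
  set b := Module.finBasis Λ N with hb
  set π : Fin (finrank Λ N) → (M ⊗[Λ] N →ₗ[Λ] M) := fun j =>
    (TensorProduct.rid Λ M).toLinearMap ∘ₗ LinearMap.lTensor M (b.coord j) with hπ
  have hπtmul : ∀ (j) (m : M) (n : N), π j (m ⊗ₜ[Λ] n) = b.repr n j • m := by
    intro j m n
    simp [hπ, Basis.coord_apply, TensorProduct.smul_tmul', TensorProduct.rid_tmul]
  have hrepr : ∀ w : M ⊗[Λ] N, ∑ j, (π j w) ⊗ₜ[Λ] b j = w := by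
    intro w
    induction w using TensorProduct.induction_on with
    | zero => simp
    | tmul m n =>
      calc ∑ j, (π j (m ⊗ₜ[Λ] n)) ⊗ₜ[Λ] b j = ∑ j, m ⊗ₜ[Λ] (b.repr n j • b j) := by
            refine Finset.sum_congr rfl fun j _ => ?_
            rw [hπtmul, TensorProduct.smul_tmul, TensorProduct.tmul_smul]
        _ = m ⊗ₜ[Λ] (∑ j, b.repr n j • b j) := by rw [TensorProduct.tmul_sum]
        _ = m ⊗ₜ[Λ] n := by rw [b.sum_repr n]
    | add x y hx hy =>
      have : ∀ j, π j (x + y) = π j x + π j y := fun j => map_add _ _ _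
      simp only [this, TensorProduct.add_tmul, Finset.sum_add_distrib, hx, hy]
  have hNg : ∀ g ∈ H, ∀ n : N, ρN g n = n := fun g hg n =>
    (mem_subInvariants.mp (hN ▸ Submodule.mem_top : n ∈ subInvariants ρN H)) g hg
  have hcomm : ∀ g ∈ H, ∀ (j) (w : M ⊗[Λ] N),
      π j ((ρM.tprod ρN) g w) = ρM g (π j w) := by
    intro g hg j w
    induction w using TensorProduct.induction_on with
    | zero => simp
    | tmul m n =>
      rw [Representation.tprod_apply, TensorProduct.map_tmul, hπtmul, hπtmul,
        hNg g hg n, map_smul]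
    | add x y hx hy => rw [map_add, map_add, map_add, hx, hy, map_add]
  have hπv : ∀ j, π j v = 0 := by
    intro j
    have : π j v ∈ subInvariants ρM H := by
      rw [mem_subInvariants]
      intro g hg
      rw [← hcomm g hg j v, hv g hg]
    rw [hM] at this
    exact this
  have := hrepr v
  simp only [hπv, TensorProduct.zero_tmul, Finset.sum_const_zero] at this
  rw [← this]
  exact Submodule.zero_mem _

lemma sum_finrank_eq_finrank_sup [FiniteDimensional Λ M] {W : ℚ → Submodule Λ M}
    (h : iSupIndep W) (S : Finset ℚ) :
    ∑ s ∈ S, finrank Λ (W s) = finrank Λ ↥(S.sup W) := by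
  classical
  induction S using Finset.induction_on with
  | empty => rw [Finset.sum_empty, Finset.sup_empty, finrank_bot]
  | @insert a S ha ih =>
    have hd : Disjoint (W a) (S.sup W) := by
      refine (h a).mono_right (Finset.sup_le fun b hb => ?_)
      have hba : b ≠ a := fun hba => ha (hba ▸ hb)
      exact le_iSup_of_le b (le_iSup_of_le hba le_rfl)
    rw [Finset.sum_insert ha, Finset.sup_insert, ih]
    have := Submodule.finrank_sup_add_finrank_inf_eq (W a) (S.sup W)
    rw [hd.eq_bot, finrank_bot] at this
    omega

lemma sum_finrank_le [FiniteDimensional Λ M] {W : ℚ → Submodule Λ M}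
    (h : iSupIndep W) (S : Finset ℚ) :
    ∑ s ∈ S, finrank Λ (W s) ≤ finrank Λ M := by
  rw [sum_finrank_eq_finrank_sup h S]
  exact Submodule.finrank_le _

lemma slopes_le {fil : ℚ → Subgroup G} {t : ℚ} {ρ : Representation Λ G M}
    {W : ℚ → Submodule Λ M} {r : ℚ}
    (hW : IsSlopeDecomp fil t ρ W) (htr : t ≤ r)
    (htop : ∀ s : ℚ, r < s → subInvariants ρ (fil s) = ⊤) :
    ∀ s : ℚ, r < s → W s = ⊥ := by
  intro s hs
  by_contra hne
  obtain ⟨hts, h2, _⟩ := hW.2.2.2 s hne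
  have hall : ∀ v ∈ W s, v = (0 : M) := by
    intro v hv
    refine h2 (lt_of_le_of_lt htr hs) v hv ?_
    exact mem_subInvariants.mp ((htop s hs) ▸ Submodule.mem_top : v ∈ subInvariants ρ (fil s))
  exact hne (eq_bot_iff.mpr fun v hv => hall v hv)

lemma dimtot_le {fil : ℚ → Subgroup G} {t : ℚ} {ρ : Representation Λ G M}
    [FiniteDimensional Λ M] {W : ℚ → Submodule Λ M} {r : ℚ}
    (hW : IsSlopeDecomp fil t ρ W) (ht : 0 ≤ t) (hr : 0 ≤ r)
    (hbd : ∀ s : ℚ, W s ≠ ⊥ → s ≤ r) :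
    dimtotOf W ≤ r * (finrank Λ M : ℚ) := by
  classical
  set S := hW.2.1.toFinset with hS
  have hmem : ∀ s : ℚ, s ∈ S ↔ W s ≠ ⊥ := fun s => hW.2.1.mem_toFinset
  have hsub : Function.support (fun s : ℚ => s * (finrank Λ (W s) : ℚ)) ⊆ S := by
    intro s hs
    rw [Function.mem_support] at hs
    rw [Finset.mem_coe, hmem]
    intro hbot
    rw [hbot] at hs
    simp [finrank_bot] at hs
  rw [dimtotOf, finsum_eq_sum_of_support_subset _ hsub]
  calc ∑ s ∈ S, s * (finrank Λ (W s) : ℚ)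
      ≤ ∑ s ∈ S, r * (finrank Λ (W s) : ℚ) := by
        refine Finset.sum_le_sum fun s hs => ?_
        exact mul_le_mul_of_nonneg_right (hbd s ((hmem s).mp hs)) (by positivity)
    _ = r * ∑ s ∈ S, (finrank Λ (W s) : ℚ) := by rw [Finset.mul_sum]
    _ ≤ r * (finrank Λ M : ℚ) := by
        refine mul_le_mul_of_nonneg_left ?_ hr
        have := sum_finrank_le hW.2.2.1.submodule_iSupIndep S
        exact_mod_cast Nat.cast_le.mpr this
  
lemma dimtot_concentrated {fil : ℚ → Subgroup G} {t : ℚ} {ρ : Representation Λ G M}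
    [FiniteDimensional Λ M] {W : ℚ → Submodule Λ M} {r : ℚ}
    (hW : IsSlopeDecomp fil t ρ W) (htr : t < r)
    (hbot : subInvariants ρ (fil r) = ⊥)
    (htop : ∀ s : ℚ, r < s → subInvariants ρ (fil s) = ⊤) :
    dimtotOf W = r * (finrank Λ M : ℚ) := by
  have hz : ∀ s : ℚ, s ≠ r → W s = ⊥ := by
    intro s hs
    rcases lt_or_gt_of_ne hs with hlt | hgt
    · by_contra hne
      obtain ⟨_, _, h3⟩ := hW.2.2.2 s hne
      have hle : W s ≤ subInvariants ρ (fil r) := by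
        intro v hv
        rw [mem_subInvariants]
        intro g hg
        exact h3 r hlt g hg v hv
      rw [hbot, le_bot_iff] at hle
      exact hne hle
    · exact slopes_le hW htr.le htop s hgt
  have hWr : W r = ⊤ := by
    rw [eq_top_iff, ← hW.2.2.1.submodule_iSup_eq_top]
    refine iSup_le fun s => ?_
    by_cases h : s = r
    · exact h ▸ le_rfl
    · rw [hz s h]; exact bot_le
  rw [dimtotOf, finsum_eq_single _ r ?_]
  · rw [hWr, finrank_top]
  · intro s hs
    rw [hz s hs]
    simp [finrank_bot]

end Aux

section Key

open Module

variable {Λ : Type*} [Field Λ] {G : Type*} [Group G]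
variable {M : Type*} [AddCommGroup M] [Module Λ M]
variable {N : Type*} [AddCommGroup N] [Module Λ N]

lemma tensor_key {fil : ℚ → Subgroup G} {t : ℚ} (ht : 0 ≤ t)
    [FiniteDimensional Λ M] [FiniteDimensional Λ N]
    (ρM : Representation Λ G M) (ρN : Representation Λ G N)
    (r r' : ℚ) (hM : IsIsoclinic fil t ρM r) (hN : IsIsoclinic fil t ρN r') (hle : r' ≤ r) :
    (∀ s : ℚ, r < s → subInvariants (ρM.tprod ρN) (fil s) = ⊤) ∧
    (∀ W, IsSlopeDecomp fil t (ρM.tprod ρN) W →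
        dimtotOf W ≤ (finrank Λ N : ℚ) * (finrank Λ M : ℚ) * r) ∧
    (r' < r →
        IsIsoclinic fil t (ρM.tprod ρN) r ∧
        ∀ W WM, IsSlopeDecomp fil t (ρM.tprod ρN) W → IsSlopeDecomp fil t ρM WM →
          dimtotOf W = (finrank Λ N : ℚ) * dimtotOf WM ∧
          dimtotOf W = (finrank Λ N : ℚ) * (finrank Λ M : ℚ) * r) := by
  have htop : ∀ s : ℚ, r < s → subInvariants (ρM.tprod ρN) (fil s) = ⊤ := fun s hs =>
    subInvariants_tprod_eq_top ρM ρN (fil s) (hM.2.2 s hs) (hN.2.2 s (lt_of_le_of_lt hle hs))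
  have hcast : ((finrank Λ (M ⊗[Λ] N)) : ℚ) = (finrank Λ M : ℚ) * (finrank Λ N : ℚ) := by
    rw [Module.finrank_tensorProduct]; push_cast; ring
  refine ⟨htop, ?_, ?_⟩
  · intro W hW
    have hbd : ∀ s : ℚ, W s ≠ ⊥ → s ≤ r := by
      intro s hne
      by_contra h
      push_neg at h
      exact hne (slopes_le hW hM.1 htop s h)
    have := dimtot_le hW ht (ht.trans hM.1) hbd
    calc dimtotOf W ≤ r * (finrank Λ (M ⊗[Λ] N) : ℚ) := this
      _ = (finrank Λ N : ℚ) * (finrank Λ M : ℚ) * r := by rw [hcast]; ring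
  · intro hlt
    have htlr : t < r := lt_of_le_of_lt hN.1 hlt
    have hbot : subInvariants (ρM.tprod ρN) (fil r) = ⊥ :=
      subInvariants_tprod_eq_bot ρM ρN (fil r) (hM.2.1 htlr) (hN.2.2 r hlt)
    refine ⟨⟨hM.1, fun _ => hbot, htop⟩, ?_⟩
    intro W WM hW hWM
    have h1 := dimtot_concentrated hW htlr hbot htop
    have h2 := dimtot_concentrated hWM htlr (hM.2.1 htlr) hM.2.2
    constructor
    · rw [h1, h2, hcast]; ring
    · rw [h1, hcast]; ring

end Key


theorem tensor_isoclinic_dimtot_sw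
    (p ℓ : ℕ) [Fact p.Prime] [Fact ℓ.Prime] (hℓp : ℓ ≠ p)
    (Λ : Type*) [Field Λ] [Finite Λ] [CharP Λ ℓ]
    -- the absolute Galois group `G_K` of the henselian discrete valuation field `K`
    (G : Type*) [Group G]
    -- the Abbes–Saito ramification filtration `{G_K^r}` and
    -- logarithmic ramification filtration `{G_{K,log}^r}` of `G_K`
    (fil logfil : ℚ → Subgroup G)
    (hfil : Antitone fil) (hlogfil : Antitone logfil)
    -- `M` and `N`: finitely generated `Λ`-modules with continuous `G_K`-action
    (M N : Type*) [AddCommGroup M] [Module Λ M] [AddCommGroup N] [Module Λ N]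
    [FiniteDimensional Λ M] [FiniteDimensional Λ N]
    (ρM : Representation Λ G M) (ρN : Representation Λ G N) :
    -- (i) the nonlogarithmic statement
    (∀ r r' : ℚ, IsIsoclinic fil 1 ρM r → IsIsoclinic fil 1 ρN r' → r' ≤ r →
      ((∀ s : ℚ, r < s → subInvariants (ρM.tprod ρN) (fil s) = ⊤) ∧
       (∀ W, IsSlopeDecomp fil 1 (ρM.tprod ρN) W →
          dimtotOf W ≤ (Module.finrank Λ N : ℚ) * (Module.finrank Λ M : ℚ) * r) ∧
       (r' < r →
          IsIsoclinic fil 1 (ρM.tprod ρN) r ∧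
          ∀ W WM, IsSlopeDecomp fil 1 (ρM.tprod ρN) W → IsSlopeDecomp fil 1 ρM WM →
            dimtotOf W = (Module.finrank Λ N : ℚ) * dimtotOf WM ∧
            dimtotOf W = (Module.finrank Λ N : ℚ) * (Module.finrank Λ M : ℚ) * r))) ∧
    -- (ii) the logarithmic statement
    (∀ r r' : ℚ, IsIsoclinic logfil 0 ρM r → IsIsoclinic logfil 0 ρN r' → r' ≤ r →
      ((∀ s : ℚ, r < s → subInvariants (ρM.tprod ρN) (logfil s) = ⊤) ∧
       (∀ W, IsSlopeDecomp logfil 0 (ρM.tprod ρN) W →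
          dimtotOf W ≤ (Module.finrank Λ N : ℚ) * (Module.finrank Λ M : ℚ) * r) ∧
       (r' < r →
          IsIsoclinic logfil 0 (ρM.tprod ρN) r ∧
          ∀ W WM, IsSlopeDecomp logfil 0 (ρM.tprod ρN) W → IsSlopeDecomp logfil 0 ρM WM →
            dimtotOf W = (Module.finrank Λ N : ℚ) * dimtotOf WM ∧
            dimtotOf W = (Module.finrank Λ N : ℚ) * (Module.finrank Λ M : ℚ) * r))) := by
  constructor
  · intro r r' hM hN hle
    exact tensor_key (by norm_num) ρM ρN r r' hM hN hle
  · intro r r' hM hN hle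
    exact tensor_key le_rfl ρM ρN r r' hM hN hle
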